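/- For every epistemically stratified program Π over a finite set of atoms, the FAEEL-world views of Π and the G91-world views of Π coincide; in particular, Π has at most one world view in each of these semantics. -/
import Mathlib


namespace Epist

attribute [local instance] Classical.propDecidable

/-- Epistemic formulas over a set (type) of atoms `α`. -/
inductive EForm (α : Type) : Type where
  | bot : EForm α
  | atom : α → EForm α
  | and : EForm α → EForm α → EForm α
  | or : EForm α → EForm α → EForm α
  | imp : EForm α → EForm α → EForm α
  | K : EForm α → EForm α

variable {α : Type}

/-- ¬φ abbreviates φ → ⊥. -/
def EForm.neg (φ : EForm α) : EForm α := .imp φ .bot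

/-- ⊤ abbreviates ¬⊥. -/
def EForm.top : EForm α := EForm.neg .bot

/-- Atoms occurring in a formula. -/
def EForm.atoms : EForm α → Set α
  | .bot => ∅
  | .atom a => {a}
  | .and φ ψ => φ.atoms ∪ ψ.atoms
  | .or φ ψ => φ.atoms ∪ ψ.atoms
  | .imp φ ψ => φ.atoms ∪ ψ.atoms
  | .K φ => φ.atoms

/-- A belief view: a set of HT-interpretations ⟨H,T⟩ (as pairs of sets of atoms). -/
abbrev BView (α : Type) := Set (Set α × Set α)

/-- W^t : the total belief view {⟨T,T⟩ : ⟨H,T⟩ ∈ W}. -/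
def tview (W : BView α) : BView α := (fun i => (i.2, i.2)) '' W

/-- Wellformedness of a belief view: nonempty and H ⊆ T for all members. -/
def isBView (W : BView α) : Prop := W.Nonempty ∧ ∀ i ∈ W, i.1 ⊆ i.2

/-- A belief view is total when all its HT-interpretations are total. -/
def totalView (W : BView α) : Prop := ∀ i ∈ W, i.1 = i.2

/-- Satisfaction of an epistemic formula by a belief interpretation ⟨W,H,T⟩. -/
def sat : EForm α → BView α → Set α → Set α → Prop
  | .bot, _, _, _ => False
  | .atom a, _, H, _ => a ∈ H
  | .and φ ψ, W, H, T => sat φ W H T ∧ sat ψ W H T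
  | .or φ ψ, W, H, T => sat φ W H T ∨ sat ψ W H T
  | .imp φ ψ, W, H, T =>
      (sat φ W H T → sat ψ W H T) ∧ (sat φ (tview W) T T → sat ψ (tview W) T T)
  | .K φ, W, _, _ => ∀ i ∈ W, sat φ W i.1 i.2

/-- ⟨W,H',T'⟩ ⊨ φ for all ⟨H',T'⟩ ∈ W. -/
def epSat (W : BView α) (φ : EForm α) : Prop := ∀ i ∈ W, sat φ W i.1 i.2

/-- W is an epistemic model of the theory Γ. -/
def epModel (W : BView α) (Γ : Set (EForm α)) : Prop :=
  isBView W ∧ ∀ φ ∈ Γ, epSat W φ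

/-- ⟨W,H,T⟩ is a belief model of the theory Γ. -/
def beliefModel (W : BView α) (H T : Set α) (Γ : Set (EForm α)) : Prop :=
  isBView W ∧ H ⊆ T ∧ (∀ φ ∈ Γ, sat φ W H T) ∧ ∀ φ ∈ Γ, epSat W φ

/-- Order ⪯ on belief interpretations: ⟨W',H',T'⟩ ⪯ ⟨W,H,T⟩. -/
def biLE (W' : BView α) (H' T' : Set α) (W : BView α) (H T : Set α) : Prop :=
  (T' = T ∧ H' ⊆ H) ∧
  (∀ i ∈ W, ∃ H₁, (H₁, i.2) ∈ W' ∧ H₁ ⊆ i.1) ∧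
  (∀ i ∈ W', ∃ H₁, (H₁, i.2) ∈ W ∧ i.1 ⊆ H₁)

/-- Strict order ≺ on belief interpretations. -/
def biLT (W' : BView α) (H' T' : Set α) (W : BView α) (H T : Set α) : Prop :=
  biLE W' H' T' W H T ∧ (W', H', T') ≠ (W, H, T)

/-- Order ⪯ on belief views. -/
def viewLE (W₁ W₂ : BView α) : Prop :=
  (∀ i ∈ W₂, ∃ H₁, (H₁, i.2) ∈ W₁ ∧ H₁ ⊆ i.1) ∧
  (∀ i ∈ W₁, ∃ H₂, (H₂, i.2) ∈ W₂ ∧ i.1 ⊆ H₂)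

/-- Strict order ≺ on belief views. -/
def viewLT (W₁ W₂ : BView α) : Prop := viewLE W₁ W₂ ∧ W₁ ≠ W₂

/-- ⟨W,T⟩ is an equilibrium belief model of Γ. -/
def eqBeliefModel (Γ : Set (EForm α)) (W : BView α) (T : Set α) : Prop :=
  totalView W ∧ beliefModel W T T Γ ∧
  ∀ W' H' T', beliefModel W' H' T' Γ → ¬ biLT W' H' T' W T T

/-- ⟨W,T⟩ is a weak equilibrium belief model of Γ: no belief-total (i.e. with total
view) belief model of Γ is ≺-smaller. -/
def weakEqBeliefModel (Γ : Set (EForm α)) (W : BView α) (T : Set α) : Prop :=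
  totalView W ∧ beliefModel W T T Γ ∧
  ∀ W' H' T', totalView W' → beliefModel W' H' T' Γ → ¬ biLT W' H' T' W T T

/-- Identification of a set of propositional interpretations with a total belief view. -/
def ofSets (S : Set (Set α)) : BView α := (fun T => (T, T)) '' S

/-- W is a FAEEL-world view of Γ iff W = { T : ⟨W,T⟩ is an equilibrium belief model }. -/
def FAEEL (Γ : Set (EForm α)) (W : BView α) : Prop :=
  isBView W ∧ totalView W ∧ W = ofSets {T | eqBeliefModel Γ W T}

/-- W is a weak autoepistemic world view of Γ. -/
def weakAEWorldView (Γ : Set (EForm α)) (W : BView α) : Prop :=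
  isBView W ∧ totalView W ∧ W = ofSets {T | weakEqBeliefModel Γ W T}

/-- W is a FEEL-world view of Γ. -/
def FEEL (Γ : Set (EForm α)) (W : BView α) : Prop :=
  totalView W ∧ epModel W Γ ∧ ∀ W', epModel W' Γ → ¬ viewLT W' W

/-- A belief view is simple iff ⟨H,T⟩,⟨H',T⟩ ∈ W imply H = H'. -/
def simpleView (W : BView α) : Prop := ∀ i ∈ W, ∀ j ∈ W, i.2 = j.2 → i.1 = j.1

/-- W is an EEL-world view of Γ. -/
def EEL (Γ : Set (EForm α)) (W : BView α) : Prop :=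
  totalView W ∧ epModel W Γ ∧
  ¬ ∃ W', simpleView W' ∧ epModel W' Γ ∧ tview W' = W ∧ ∃ i ∈ W', i.1 ⊂ i.2

/-- Ordinary here-and-there satisfaction (for objective, i.e. K-free, formulas). -/
def htSat (φ : EForm α) (H T : Set α) : Prop := sat φ (∅ : BView α) H T

/-- T is a stable model of the (objective) theory Δ. -/
def stableModel (Δ : Set (EForm α)) (T : Set α) : Prop :=
  (∀ φ ∈ Δ, htSat φ T T) ∧ ∀ H, H ⊂ T → ¬ ∀ φ ∈ Δ, htSat φ H T

/-- SM[Δ] : the set of stable models of Δ. -/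
def SMset (Δ : Set (EForm α)) : Set (Set α) := {T | stableModel Δ T}

/-- Subjective reduct of a formula w.r.t. a belief view W and a signature U:
each maximal subformula Kφ with Atoms(φ) ⊆ U is replaced by ⊤ if W ⊨ Kφ
and by ⊥ otherwise. -/
noncomputable def reduct (W : BView α) (U : Set α) : EForm α → EForm α
  | .bot => .bot
  | .atom a => .atom a
  | .and φ ψ => .and (reduct W U φ) (reduct W U ψ)
  | .or φ ψ => .or (reduct W U φ) (reduct W U ψ)
  | .imp φ ψ => .imp (reduct W U φ) (reduct W U ψ)
  | .K φ =>
      if φ.atoms ⊆ U then (if epSat W (.K φ) then EForm.top else .bot)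
      else .K (reduct W U φ)

/-- W is a G91-world view of Γ iff W = SM[Γ^W]. -/
def G91 (Γ : Set (EForm α)) (W : BView α) : Prop :=
  isBView W ∧ totalView W ∧ W = ofSets (SMset (reduct W Set.univ '' Γ))

/-- Negatively subjective reduct: each maximal subformula ¬Kφ is replaced
by ⊤ if W ⊭ Kφ and by ⊥ otherwise. -/
noncomputable def negReduct (W : BView α) : EForm α → EForm α
  | .bot => .bot
  | .atom a => .atom a
  | .and φ ψ => .and (negReduct W φ) (negReduct W ψ)
  | .or φ ψ => .or (negReduct W φ) (negReduct W ψ)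
  | .imp (.K φ) .bot => if epSat W (.K φ) then .bot else EForm.top
  | .imp φ ψ => .imp (negReduct W φ) (negReduct W ψ)
  | .K φ => .K (negReduct W φ)

/-- Atom, ⊤ or ⊥. -/
def isAtomBase (φ : EForm α) : Prop := (∃ a, φ = .atom a) ∨ φ = EForm.top ∨ φ = .bot

/-- Objective literals: l, ¬l or ¬¬l for l an atom, ⊤ or ⊥. -/
def isObjLit (φ : EForm α) : Prop :=
  isAtomBase φ ∨ (∃ ψ, isAtomBase ψ ∧ φ = EForm.neg ψ) ∨
    (∃ ψ, isAtomBase ψ ∧ φ = EForm.neg (EForm.neg ψ))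

/-- Subjective literals: Kl, ¬Kl or ¬¬Kl for l an objective literal. -/
def isSubjLit (φ : EForm α) : Prop :=
  (∃ l, isObjLit l ∧ φ = .K l) ∨ (∃ l, isObjLit l ∧ φ = EForm.neg (.K l)) ∨
    (∃ l, isObjLit l ∧ φ = EForm.neg (EForm.neg (.K l)))

/-- Positive subjective literals: Kl. -/
def isPosSubjLit (φ : EForm α) : Prop := ∃ l, isObjLit l ∧ φ = .K l

/-- A rule: a head disjunction of atoms and a body list of literals. -/
structure ERule (α : Type) where
  head : List α
  body : List (EForm α)

/-- Wellformedness of a rule: every body member is an (objective or subjective) literal. -/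
def ERule.wf (r : ERule α) : Prop := ∀ φ ∈ r.body, isObjLit φ ∨ isSubjLit φ

/-- Disjunction of atoms (⊥ when empty). -/
def disjForm : List α → EForm α
  | [] => .bot
  | a :: l => .or (.atom a) (disjForm l)

/-- Conjunction of formulas (⊤ when empty). -/
def conjForm : List (EForm α) → EForm α
  | [] => EForm.top
  | φ :: l => .and φ (conjForm l)

/-- The formula Head(r) ← Body(r) corresponding to a rule. -/
def ERule.form (r : ERule α) : EForm α := .imp (conjForm r.body) (disjForm r.head)

/-- Atoms of Head(r). -/
def ERule.headAtoms (r : ERule α) : Set α := {a | a ∈ r.head}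

/-- Atoms of Body_obj(r). -/
def ERule.objBodyAtoms (r : ERule α) : Set α := {a | ∃ φ ∈ r.body, isObjLit φ ∧ a ∈ φ.atoms}

/-- Atoms of Body_sub(r). -/
def ERule.subjBodyAtoms (r : ERule α) : Set α := {a | ∃ φ ∈ r.body, isSubjLit φ ∧ a ∈ φ.atoms}

/-- Atoms of Body⁺_sub(r). -/
def ERule.posSubjBodyAtoms (r : ERule α) : Set α :=
  {a | ∃ φ ∈ r.body, isPosSubjLit φ ∧ a ∈ φ.atoms}

/-- Atoms(r). -/
def ERule.atoms (r : ERule α) : Set α := r.headAtoms ∪ {a | ∃ φ ∈ r.body, a ∈ φ.atoms}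

/-- A rule is objective if all its body literals are objective. -/
def ERule.objective (r : ERule α) : Prop := ∀ φ ∈ r.body, isObjLit φ

/-- A program is a set of rules. -/
abbrev EProgram (α : Type) := Set (ERule α)

def progWF (P : EProgram α) : Prop := ∀ r ∈ P, r.wf

/-- The theory consisting of the formulas of the rules of a program. -/
def progTheory (P : EProgram α) : Set (EForm α) := ERule.form '' P

def progAtoms (P : EProgram α) : Set α := {a | ∃ r ∈ P, a ∈ r.atoms}

def progObjective (P : EProgram α) : Prop := ∀ r ∈ P, r.objective

/-- U is an epistemic splitting set of P. -/
def splittingSet (P : EProgram α) (U : Set α) : Prop :=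
  ∀ r ∈ P, r.atoms ⊆ U ∨ (r.objBodyAtoms ∪ r.headAtoms) ∩ U = ∅

/-- ⟨B,Tp⟩ is a splitting of P w.r.t. U. -/
def isSplitting (P : EProgram α) (U : Set α) (B Tp : EProgram α) : Prop :=
  B ∩ Tp = ∅ ∧ B ∪ Tp = P ∧ (∀ r ∈ B, r.atoms ⊆ U) ∧
    ∀ r ∈ Tp, (r.objBodyAtoms ∪ r.headAtoms) ∩ U = ∅

/-- Subjective reduct of a rule. -/
noncomputable def ruleReduct (W : BView α) (U : Set α) (r : ERule α) : ERule α :=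
  ⟨r.head, r.body.map (reduct W U)⟩

/-- E_U(Π,W) := (T_U(Π))^W_U, here taking the top part Tp as argument. -/
noncomputable def EU (Tp : EProgram α) (W : BView α) (U : Set α) : EProgram α :=
  ruleReduct W U '' Tp

/-- W_b ⊔ W_t (for total belief views: pointwise unions). -/
def vjoin (W₁ W₂ : BView α) : BView α :=
  {i | ∃ j ∈ W₁, ∃ k ∈ W₂, i = (j.1 ∪ k.1, j.2 ∪ k.2)}

/-- W|_U (for total belief views: pointwise intersection with U). -/
def vrestrict (W : BView α) (U : Set α) : BView α :=
  {i | ∃ j ∈ W, i = (j.1 ∩ U, j.2 ∩ U)}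

/-- Epistemic dependence dep(a,b). -/
def dep (P : EProgram α) (a b : α) : Prop :=
  ∃ r ∈ P, a ∈ r.headAtoms ∪ r.objBodyAtoms ∧ b ∈ r.subjBodyAtoms

/-- Positive epistemic dependence dep⁺(a,b). -/
def depPos (P : EProgram α) (a b : α) : Prop :=
  ∃ r ∈ P, a ∈ r.headAtoms ∪ r.objBodyAtoms ∧ b ∈ r.posSubjBodyAtoms

/-- P is epistemically stratified. -/
def stratified (P : EProgram α) : Prop :=
  ∃ lam : α → ℕ,
    (∀ r ∈ P, ∀ a ∈ r.atoms \ r.subjBodyAtoms, ∀ b ∈ r.atoms \ r.subjBodyAtoms,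
      lam a = lam b) ∧
    ∀ a b, dep P a b → lam a > lam b

/-- P is epistemically tight. -/
def tight (P : EProgram α) : Prop :=
  ∃ lam : α → ℕ,
    (∀ r ∈ P, ∀ a ∈ r.atoms \ r.subjBodyAtoms, ∀ b ∈ r.atoms \ r.subjBodyAtoms,
      lam a = lam b) ∧
    ∀ a b, depPos P a b → lam a > lam b

/-- A semantics S satisfies the epistemic splitting property. -/
def satisfiesSplitting (S : EProgram α → BView α → Prop) : Prop :=
  ∀ P : EProgram α, progWF P → ∀ U : Set α, splittingSet P U →
    ∀ B Tp : EProgram α, isSplitting P U B Tp →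
      ∀ W : BView α,
        S P W ↔ ∃ Wb Wt, S B Wb ∧ S (EU Tp Wb U) Wt ∧ W = vjoin Wb Wt

/-- A semantics S satisfies supra-ASP. -/
def supraASP (S : EProgram α → BView α → Prop) : Prop :=
  ∀ P : EProgram α, progWF P → progObjective P →
    (SMset (progTheory P) ≠ ∅ ∧ ∀ W, (S P W ↔ W = ofSets (SMset (progTheory P)))) ∨
    (SMset (progTheory P) = ∅ ∧ ∀ W, ¬ S P W)

end Epist
namespace Epist

section Aux
attribute [local instance] Classical.propDecidable
variable {α : Type}

/-- K-freeness of a formula. -/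
def KFree : EForm α → Prop
  | .bot => True
  | .atom _ => True
  | .and φ ψ => KFree φ ∧ KFree ψ
  | .or φ ψ => KFree φ ∧ KFree ψ
  | .imp φ ψ => KFree φ ∧ KFree ψ
  | .K _ => False

@[simp] lemma tview_empty : tview (∅ : BView α) = ∅ := by simp [tview]

lemma tview_total {W : BView α} (h : totalView W) : tview W = W := by
  ext i
  constructor
  · rintro ⟨⟨j1, j2⟩, hj, rfl⟩
    have hj2 : j1 = j2 := h _ hj
    subst hj2; exact hj
  · intro hi
    obtain ⟨i1, i2⟩ := i
    have hi2 : i1 = i2 := h _ hi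
    subst hi2
    exact ⟨(i1, i1), hi, rfl⟩

lemma totalView_tview (W : BView α) : totalView (tview W) := by
  rintro i ⟨j, hj, rfl⟩; rfl

@[simp] lemma tview_idem (W : BView α) : tview (tview W) = tview W :=
  tview_total (totalView_tview W)

/-- K-free formulas do not depend on the belief view. -/
lemma sat_Kfree {φ : EForm α} (h : KFree φ) :
    ∀ (W W' : BView α) (H T : Set α), sat φ W H T ↔ sat φ W' H T := by
  induction φ with
  | bot => intro W W' H T; simp [sat]
  | atom a => intro W W' H T; simp [sat]
  | and φ ψ ihφ ihψ =>
    intro W W' H T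
    simp only [sat]; rw [ihφ h.1 W W', ihψ h.2 W W']
  | or φ ψ ihφ ihψ =>
    intro W W' H T
    simp only [sat]; rw [ihφ h.1 W W', ihψ h.2 W W']
  | imp φ ψ ihφ ihψ =>
    intro W W' H T
    simp only [sat]
    rw [ihφ h.1 W W', ihψ h.2 W W', ihφ h.1 (tview W) (tview W'), ihψ h.2 (tview W) (tview W')]
  | K φ ih => exact absurd h (by simp [KFree])

lemma sat_iff_htSat {φ : EForm α} (h : KFree φ) (W : BView α) (H T : Set α) :
    sat φ W H T ↔ htSat φ H T := sat_Kfree h W ∅ H T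

/-- Relevance: ht-satisfaction of a K-free formula only depends on the atoms of
the formula. -/
lemma htSat_relevance {φ : EForm α} (h : KFree φ) :
    ∀ (H T H' T' : Set α), (∀ a ∈ φ.atoms, a ∈ H ↔ a ∈ H') →
      (∀ a ∈ φ.atoms, a ∈ T ↔ a ∈ T') → (htSat φ H T ↔ htSat φ H' T') := by
  induction φ with
  | bot => intro H T H' T' hH hT; simp [htSat, sat]
  | atom a => intro H T H' T' hH hT; simpa [htSat, sat] using hH a (by simp [EForm.atoms])
  | and φ ψ ihφ ihψ =>
    intro H T H' T' hH hT
    have h1 := ihφ h.1 H T H' T' (fun a ha => hH a (Or.inl ha)) (fun a ha => hT a (Or.inl ha))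
    have h2 := ihψ h.2 H T H' T' (fun a ha => hH a (Or.inr ha)) (fun a ha => hT a (Or.inr ha))
    simp only [htSat, sat] at *; rw [h1, h2]
  | or φ ψ ihφ ihψ =>
    intro H T H' T' hH hT
    have h1 := ihφ h.1 H T H' T' (fun a ha => hH a (Or.inl ha)) (fun a ha => hT a (Or.inl ha))
    have h2 := ihψ h.2 H T H' T' (fun a ha => hH a (Or.inr ha)) (fun a ha => hT a (Or.inr ha))
    simp only [htSat, sat] at *; rw [h1, h2]
  | imp φ ψ ihφ ihψ =>
    intro H T H' T' hH hT
    have h1 := ihφ h.1 H T H' T' (fun a ha => hH a (Or.inl ha)) (fun a ha => hT a (Or.inl ha))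
    have h2 := ihψ h.2 H T H' T' (fun a ha => hH a (Or.inr ha)) (fun a ha => hT a (Or.inr ha))
    have h3 := ihφ h.1 T T T' T' (fun a ha => hT a (Or.inl ha)) (fun a ha => hT a (Or.inl ha))
    have h4 := ihψ h.2 T T T' T' (fun a ha => hT a (Or.inr ha)) (fun a ha => hT a (Or.inr ha))
    simp only [htSat, sat, tview_empty] at *
    rw [h1, h2, h3, h4]
  | K φ ih => exact absurd h (by simp [KFree])

/-- Persistence for K-free formulas. -/
lemma htSat_persist {φ : EForm α} (h : KFree φ) {H T : Set α} (hs : H ⊆ T) :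
    htSat φ H T → htSat φ T T := by
  induction φ with
  | bot => simp [htSat, sat]
  | atom a => exact fun ha => hs ha
  | and φ ψ ihφ ihψ => exact fun hh => ⟨ihφ h.1 hh.1, ihψ h.2 hh.2⟩
  | or φ ψ ihφ ihψ => exact fun hh => hh.elim (fun x => Or.inl (ihφ h.1 x)) (fun x => Or.inr (ihψ h.2 x))
  | imp φ ψ ihφ ihψ =>
    intro hh
    simp only [htSat, sat, tview_empty] at *
    exact ⟨hh.2, hh.2⟩
  | K φ ih => exact absurd h (by simp [KFree])

@[simp] lemma htSat_bot (H T : Set α) : ¬ htSat (.bot) H T := by simp [htSat, sat]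

@[simp] lemma htSat_top (H T : Set α) : htSat (EForm.top : EForm α) H T := by
  simp [htSat, EForm.top, EForm.neg, sat]

@[simp] lemma atoms_top : (EForm.top : EForm α).atoms = ∅ := by
  simp [EForm.top, EForm.neg, EForm.atoms]

@[simp] lemma KFree_top : KFree (EForm.top : EForm α) := by
  simp [EForm.top, EForm.neg, KFree]

end Aux

section Aux2
attribute [local instance] Classical.propDecidable
variable {α : Type}

lemma sat_bot' (W : BView α) (H T : Set α) : sat (.bot : EForm α) W H T ↔ False := Iff.rfl
lemma sat_atom' (a : α) (W : BView α) (H T : Set α) : sat (.atom a) W H T ↔ a ∈ H := Iff.rfl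
lemma sat_and' (φ ψ : EForm α) (W : BView α) (H T : Set α) :
    sat (.and φ ψ) W H T ↔ sat φ W H T ∧ sat ψ W H T := Iff.rfl
lemma sat_or' (φ ψ : EForm α) (W : BView α) (H T : Set α) :
    sat (.or φ ψ) W H T ↔ sat φ W H T ∨ sat ψ W H T := Iff.rfl
lemma sat_imp' (φ ψ : EForm α) (W : BView α) (H T : Set α) :
    sat (.imp φ ψ) W H T ↔
      (sat φ W H T → sat ψ W H T) ∧ (sat φ (tview W) T T → sat ψ (tview W) T T) := Iff.rfl
lemma sat_K' (φ : EForm α) (W : BView α) (H T : Set α) :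
    sat (.K φ) W H T ↔ ∀ i ∈ W, sat φ W i.1 i.2 := Iff.rfl

/-- Truth of K l "at the view" for an objective l. -/
def Kval (W : BView α) (l : EForm α) : Prop := ∀ i ∈ W, htSat l i.1 i.2

lemma Kval_tview {W : BView α} {l : EForm α} :
    Kval (tview W) l ↔ ∀ i ∈ W, htSat l i.2 i.2 := by
  constructor
  · exact fun h i hi => h (i.2, i.2) ⟨i, hi, rfl⟩
  · rintro h i ⟨j, hj, rfl⟩; exact h j hj

lemma sat_K {l : EForm α} (hl : KFree l) (W : BView α) (H T : Set α) :
    sat (.K l) W H T ↔ Kval W l := by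
  rw [sat_K']
  exact forall₂_congr fun i hi => sat_iff_htSat hl W i.1 i.2

lemma Kval_mono {l : EForm α} (hl : KFree l) {W : BView α}
    (hW : ∀ i ∈ W, i.1 ⊆ i.2) : Kval W l → Kval (tview W) l := by
  intro h
  rw [Kval_tview]
  exact fun i hi => htSat_persist hl (hW i hi) (h i hi)

lemma sat_negK {l : EForm α} (hl : KFree l) {W : BView α}
    (hW : ∀ i ∈ W, i.1 ⊆ i.2) (H T : Set α) :
    sat (EForm.neg (.K l)) W H T ↔ ¬ Kval (tview W) l := by
  show sat (.imp (.K l) .bot) W H T ↔ _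
  rw [sat_imp', sat_bot', sat_bot', sat_K hl, sat_K hl]
  constructor
  · exact fun h => h.2
  · exact fun h => ⟨fun h2 => h (Kval_mono hl hW h2), h⟩

lemma sat_negnegK {l : EForm α} (hl : KFree l) (W : BView α) (H T : Set α) :
    sat (EForm.neg (EForm.neg (.K l))) W H T ↔ Kval (tview W) l := by
  show sat (.imp (.imp (.K l) .bot) .bot) W H T ↔ _
  rw [sat_imp', sat_imp', sat_imp']
  simp only [sat_bot', sat_K hl, tview_idem]
  tauto

lemma epSat_K {l : EForm α} (hl : KFree l) {W : BView α} (hne : W.Nonempty) :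
    epSat W (.K l) ↔ Kval W l := by
  unfold epSat
  constructor
  · obtain ⟨i, hi⟩ := hne
    exact fun h => (sat_K hl W i.1 i.2).1 (h i hi)
  · exact fun h i hi => (sat_K hl W i.1 i.2).2 h

lemma reduct_Kfree {φ : EForm α} (h : KFree φ) (W : BView α) (U : Set α) :
    reduct W U φ = φ := by
  induction φ with
  | bot => rfl
  | atom a => rfl
  | and φ ψ ihφ ihψ => simp only [reduct]; rw [ihφ h.1, ihψ h.2]
  | or φ ψ ihφ ihψ => simp only [reduct]; rw [ihφ h.1, ihψ h.2]
  | imp φ ψ ihφ ihψ => simp only [reduct]; rw [ihφ h.1, ihψ h.2]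
  | K φ ih => exact absurd h (by simp [KFree])

lemma KFree_reduct_univ (W : BView α) (φ : EForm α) :
    KFree (reduct W Set.univ φ) := by
  induction φ with
  | bot => trivial
  | atom a => trivial
  | and φ ψ ihφ ihψ => exact ⟨ihφ, ihψ⟩
  | or φ ψ ihφ ihψ => exact ⟨ihφ, ihψ⟩
  | imp φ ψ ihφ ihψ => exact ⟨ihφ, ihψ⟩
  | K φ ih =>
    simp only [reduct, Set.subset_univ, if_true]
    split
    · exact KFree_top
    · trivial

lemma red_K (W : BView α) (l : EForm α) :
    reduct W Set.univ (.K l) = if epSat W (.K l) then EForm.top else .bot := by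
  simp [reduct, Set.subset_univ]

lemma red_neg (W : BView α) (U : Set α) (φ : EForm α) :
    reduct W U (EForm.neg φ) = EForm.neg (reduct W U φ) := by
  show reduct W U (.imp φ .bot) = _
  simp only [reduct]; rfl

lemma htSat_neg (φ : EForm α) (H T : Set α) :
    htSat (EForm.neg φ) H T ↔ ¬ htSat φ H T ∧ ¬ htSat φ T T := by
  show sat (.imp φ .bot) ∅ H T ↔ _
  rw [sat_imp', sat_bot', sat_bot', tview_empty]
  exact Iff.rfl

lemma htSat_ite (c : Prop) (H T : Set α) :
    htSat (if c then EForm.top else (.bot : EForm α)) H T ↔ c := by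
  by_cases h : c <;> simp [h]

lemma htSat_red_K (W : BView α) (l : EForm α) (H T : Set α) :
    htSat (reduct W Set.univ (.K l)) H T ↔ epSat W (.K l) := by
  rw [red_K]; exact htSat_ite _ H T

lemma htSat_red_negK (W : BView α) (l : EForm α) (H T : Set α) :
    htSat (reduct W Set.univ (EForm.neg (.K l))) H T ↔ ¬ epSat W (.K l) := by
  rw [red_neg, htSat_neg, htSat_red_K, htSat_red_K]
  tauto

lemma htSat_red_negnegK (W : BView α) (l : EForm α) (H T : Set α) :
    htSat (reduct W Set.univ (EForm.neg (EForm.neg (.K l)))) H T ↔ epSat W (.K l) := by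
  rw [red_neg, htSat_neg, htSat_red_negK, htSat_red_negK]
  tauto

lemma sat_conj (L : List (EForm α)) (W : BView α) (H T : Set α) :
    sat (conjForm L) W H T ↔ ∀ φ ∈ L, sat φ W H T := by
  induction L with
  | nil =>
    simp only [conjForm, List.not_mem_nil]
    show sat (.imp .bot .bot) W H T ↔ _
    rw [sat_imp']
    simp [sat_bot']
  | cons φ L ih => rw [conjForm, sat_and', ih]; simp

lemma sat_disj (L : List α) (W : BView α) (H T : Set α) :
    sat (disjForm L) W H T ↔ ∃ a ∈ L, a ∈ H := by
  induction L with
  | nil => rw [disjForm, sat_bot']; simp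
  | cons a L ih => rw [disjForm, sat_or', sat_atom', ih]; simp

lemma reduct_conj (W : BView α) (U : Set α) (L : List (EForm α)) :
    reduct W U (conjForm L) = conjForm (L.map (reduct W U)) := by
  induction L with
  | nil => exact reduct_Kfree KFree_top W U
  | cons φ L ih => simp only [conjForm, reduct, List.map, ih]

lemma reduct_disj (W : BView α) (U : Set α) (L : List α) :
    reduct W U (disjForm L) = disjForm L := by
  induction L with
  | nil => rfl
  | cons a L ih => simp only [disjForm, reduct, ih]

lemma atoms_neg (φ : EForm α) : (EForm.neg φ).atoms = φ.atoms := by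
  show (EForm.imp φ .bot).atoms = _
  simp [EForm.atoms]

lemma atoms_disj (L : List α) : (disjForm L).atoms = {a | a ∈ L} := by
  induction L with
  | nil => ext b; simp [disjForm, EForm.atoms]
  | cons a L ih =>
    simp only [disjForm, EForm.atoms, ih]
    ext b; simp

lemma mem_atoms_conj {L : List (EForm α)} {a : α} :
    a ∈ (conjForm L).atoms ↔ ∃ φ ∈ L, a ∈ φ.atoms := by
  induction L with
  | nil =>
    show a ∈ (EForm.imp .bot .bot).atoms ↔ _
    simp [EForm.atoms]
  | cons φ L ih =>
    show a ∈ (EForm.and φ (conjForm L)).atoms ↔ _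
    simp only [EForm.atoms, Set.mem_union, ih]
    simp

lemma atomBase_KFree {φ : EForm α} (h : isAtomBase φ) : KFree φ := by
  rcases h with ⟨a, rfl⟩ | rfl | rfl
  · trivial
  · exact KFree_top
  · trivial

lemma KFree_neg {φ : EForm α} (h : KFree φ) : KFree (EForm.neg φ) := ⟨h, trivial⟩

lemma objLit_KFree {φ : EForm α} (h : isObjLit φ) : KFree φ := by
  rcases h with h | ⟨ψ, hψ, rfl⟩ | ⟨ψ, hψ, rfl⟩
  · exact atomBase_KFree h
  · exact KFree_neg (atomBase_KFree hψ)
  · exact KFree_neg (KFree_neg (atomBase_KFree hψ))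

lemma reduct_subj_atoms {φ : EForm α} (h : isSubjLit φ) (W : BView α) :
    (reduct W Set.univ φ).atoms = ∅ := by
  have hite : ∀ c : Prop, (if c then EForm.top else (.bot : EForm α)).atoms = ∅ := by
    intro c; by_cases hc : c <;> simp [hc, EForm.atoms]
  rcases h with ⟨l, hl, rfl⟩ | ⟨l, hl, rfl⟩ | ⟨l, hl, rfl⟩
  · rw [red_K]; exact hite _
  · rw [red_neg, atoms_neg, red_K]; exact hite _
  · rw [red_neg, red_neg, atoms_neg, atoms_neg, red_K]; exact hite _

end Aux2

section Aux3
attribute [local instance] Classical.propDecidable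
variable {α : Type}

/-- The total worlds of a view. -/
def Ts (W : BView α) : Set (Set α) := {T | (T, T) ∈ W}

lemma mem_ofSets {S : Set (Set α)} {T : Set α} : (T, T) ∈ ofSets S ↔ T ∈ S := by
  constructor
  · rintro ⟨T', hT', heq⟩
    obtain ⟨h1, h2⟩ := Prod.mk.injEq .. ▸ heq
    exact h1 ▸ hT'
  · exact fun h => ⟨T, h, rfl⟩

lemma Ts_ofSets (S : Set (Set α)) : Ts (ofSets S) = S := by
  ext T; exact mem_ofSets

lemma totalView_ofSets (S : Set (Set α)) : totalView (ofSets S) := by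
  rintro i ⟨T, hT, rfl⟩; rfl

lemma total_eq_ofSets_Ts {W : BView α} (h : totalView W) : W = ofSets (Ts W) := by
  ext i
  constructor
  · intro hi
    obtain ⟨i1, i2⟩ := i
    have : i1 = i2 := h _ hi
    subst this
    exact ⟨i1, hi, rfl⟩
  · rintro ⟨T, hT, rfl⟩; exact hT

lemma mem_Ts_of_mem {W : BView α} (h : totalView W) {i : Set α × Set α} (hi : i ∈ W) :
    i.2 ∈ Ts W := by
  have h2 := h i hi
  obtain ⟨i1, i2⟩ := i
  cases h2
  exact hi

/-- Kval at a total reference view is a property of its worlds. -/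
lemma Kval_total {W : BView α} (htot : totalView W) {l : EForm α} :
    Kval W l ↔ ∀ T ∈ Ts W, htSat l T T := by
  constructor
  · exact fun h T hT => h (T, T) hT
  · intro h i hi
    have h2 := htot i hi
    obtain ⟨i1, i2⟩ := i
    cases h2
    exact h i1 hi

/-- Bridge: Kval at the t-view of a comparison view agrees with Kval at the
reference total view, provided the two views have the same total worlds. -/
lemma Kval_tview_bridge {W W' : BView α} (htot : totalView W) {l : EForm α}
    (hTs1 : ∀ i ∈ W', (i.2, i.2) ∈ W)
    (hTs2 : ∀ i ∈ W, ∃ H₁, (H₁, i.2) ∈ W' ∧ H₁ ⊆ i.1) :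
    Kval (tview W') l ↔ Kval W l := by
  rw [Kval_tview, Kval_total htot]
  constructor
  · intro h T hT
    obtain ⟨H₁, hmem, -⟩ := hTs2 (T, T) hT
    exact h (H₁, T) hmem
  · intro h i hi
    exact h i.2 (hTs1 i hi)

/-- The reduct of the program theory. -/
def Red (P : EProgram α) (W : BView α) : Set (EForm α) :=
  reduct W Set.univ '' progTheory P

lemma mem_Red {P : EProgram α} {W : BView α} {ψ : EForm α} :
    ψ ∈ Red P W ↔ ∃ r ∈ P, ψ = reduct W Set.univ r.form := by
  constructor
  · rintro ⟨φ, ⟨r, hr, rfl⟩, rfl⟩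
    exact ⟨r, hr, rfl⟩
  · rintro ⟨r, hr, rfl⟩
    exact ⟨r.form, ⟨r, hr, rfl⟩, rfl⟩

/-- Evaluation of a subjective literal in a context (W',H,T):
it equals the ht-value of its reduct w.r.t. W, under the two K-value bridges. -/
lemma subj_lit_eval {W W' : BView α} (htot : totalView W) (hne : W.Nonempty)
    (hwf' : ∀ i ∈ W', i.1 ⊆ i.2)
    {φ : EForm α} (hφ : isSubjLit φ)
    (hb1 : ∀ l, isObjLit l → l.atoms ⊆ φ.atoms → (Kval W' l ↔ Kval W l))
    (hb2 : ∀ l, isObjLit l → l.atoms ⊆ φ.atoms → (Kval (tview W') l ↔ Kval W l))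
    (H T H' T' : Set α) :
    sat φ W' H T ↔ htSat (reduct W Set.univ φ) H' T' := by
  rcases hφ with ⟨l, hl, rfl⟩ | ⟨l, hl, rfl⟩ | ⟨l, hl, rfl⟩
  · rw [sat_K (objLit_KFree hl), htSat_red_K, epSat_K (objLit_KFree hl) hne]
    exact hb1 l hl (by rfl)
  · rw [sat_negK (objLit_KFree hl) hwf', htSat_red_negK, epSat_K (objLit_KFree hl) hne]
    exact not_congr (hb2 l hl (by rw [atoms_neg]; rfl))
  · rw [sat_negnegK (objLit_KFree hl), htSat_red_negnegK, epSat_K (objLit_KFree hl) hne]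
    exact hb2 l hl (by rw [atoms_neg, atoms_neg]; rfl)

/-- Lemma R: at the reference total view itself, satisfaction of a rule equals
ht-satisfaction of its reduct. -/
lemma rule_sat_iff_reduct {W : BView α} (htot : totalView W)
    (hwfW : ∀ i ∈ W, i.1 ⊆ i.2) (hne : W.Nonempty)
    {r : ERule α} (hr : r.wf) (H T : Set α) :
    sat r.form W H T ↔ htSat (reduct W Set.univ r.form) H T := by
  have hB : ∀ (H T : Set α),
      sat (conjForm r.body) W H T ↔ htSat (reduct W Set.univ (conjForm r.body)) H T := by
    intro H T
    rw [reduct_conj]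
    unfold htSat
    rw [sat_conj, sat_conj]
    constructor
    · intro h φ' hφ'
      rw [List.mem_map] at hφ'
      obtain ⟨φ, hφ, rfl⟩ := hφ'
      rcases hr φ hφ with hobj | hsubj
      · rw [reduct_Kfree (objLit_KFree hobj)]
        exact (sat_iff_htSat (objLit_KFree hobj) W H T).1 (h φ hφ)
      · exact (subj_lit_eval htot hne hwfW hsubj
          (fun l _ _ => Iff.rfl)
          (fun l hl _ => by rw [tview_total htot]) H T H T).1 (h φ hφ)
    · intro h φ hφ
      rcases hr φ hφ with hobj | hsubj
      · have := h _ (List.mem_map.2 ⟨φ, hφ, rfl⟩)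
        rw [reduct_Kfree (objLit_KFree hobj)] at this
        exact (sat_iff_htSat (objLit_KFree hobj) W H T).2 this
      · exact (subj_lit_eval htot hne hwfW hsubj
          (fun l _ _ => Iff.rfl)
          (fun l hl _ => by rw [tview_total htot]) H T H T).2
          (h _ (List.mem_map.2 ⟨φ, hφ, rfl⟩))
  have hD : ∀ (H T : Set α),
      sat (disjForm r.head) W H T ↔ htSat (disjForm r.head) H T := by
    intro H T; rw [sat_disj]; unfold htSat; rw [sat_disj]
  show sat (.imp (conjForm r.body) (disjForm r.head)) W H T ↔
    sat (reduct W Set.univ (.imp (conjForm r.body) (disjForm r.head))) ∅ H T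
  simp only [reduct, reduct_disj]
  rw [sat_imp', sat_imp', tview_empty, tview_total htot]
  unfold htSat at hB hD
  rw [hB H T, hB T T, hD H T, hD T T]

/-- Sub-lemma A: every equilibrium belief world of the program is a stable
model of the reduct. -/
lemma subA {P : EProgram α} (hwf : progWF P) {W : BView α} {T : Set α}
    (h : eqBeliefModel (progTheory P) W T) : stableModel (Red P W) T := by
  obtain ⟨htot, hbm, hmin⟩ := h
  obtain ⟨⟨hne, hwfW⟩, -, hsat, hep⟩ := hbm
  constructor
  · intro ψ hψ
    rw [mem_Red] at hψ
    obtain ⟨r, hr, rfl⟩ := hψ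
    exact (rule_sat_iff_reduct htot hwfW hne (hwf r hr) T T).1
      (hsat r.form ⟨r, hr, rfl⟩)
  · intro H hH hsatH
    have hbmH : beliefModel W H T (progTheory P) := by
      refine ⟨⟨hne, hwfW⟩, hH.subset, ?_, hep⟩
      rintro φ ⟨r, hr, rfl⟩
      exact (rule_sat_iff_reduct htot hwfW hne (hwf r hr) H T).2
        (hsatH _ (mem_Red.2 ⟨r, hr, rfl⟩))
    refine hmin W H T hbmH ⟨⟨⟨rfl, hH.subset⟩, ?_, ?_⟩, ?_⟩
    · exact fun i hi => ⟨i.1, by simpa using hi, subset_rfl⟩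
    · exact fun i hi => ⟨i.1, by simpa using hi, subset_rfl⟩
    · intro heq
      have hHT : H = T := congrArg (fun x => x.2.1) heq
      exact hH.ne hHT
end Aux3

section Aux4
attribute [local instance] Classical.propDecidable
variable {α : Type}

lemma atoms_imp (φ ψ : EForm α) : (EForm.imp φ ψ).atoms = φ.atoms ∪ ψ.atoms := rfl

lemma headObj_sub_atoms {r : ERule α} :
    r.headAtoms ∪ r.objBodyAtoms ⊆ r.atoms := by
  rintro a (ha | ⟨φ, hφ, -, ha⟩)
  · exact Or.inl ha
  · exact Or.inr ⟨φ, hφ, ha⟩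

lemma subj_sub_atoms {r : ERule α} {φ : EForm α} (hφ : φ ∈ r.body)
    (hs : isSubjLit φ) : φ.atoms ⊆ r.subjBodyAtoms :=
  fun a ha => ⟨φ, hφ, hs, ha⟩

section Strat
variable {P : EProgram α} {lam : α → ℕ}
variable (hsame : ∀ r ∈ P, ∀ a ∈ r.atoms \ r.subjBodyAtoms, ∀ b ∈ r.atoms \ r.subjBodyAtoms,
      lam a = lam b)
variable (hdep : ∀ a b, dep P a b → lam a > lam b)

include hdep in
lemma strat_no_overlap {r : ERule α} (hr : r ∈ P) {a : α}
    (ha : a ∈ r.headAtoms ∪ r.objBodyAtoms) : a ∉ r.subjBodyAtoms := by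
  intro hsub
  exact absurd (hdep a a ⟨r, hr, ha, hsub⟩) (lt_irrefl _)

include hsame hdep in
lemma strat_rule_level {r : ERule α} (hr : r ∈ P) {a b : α}
    (ha : a ∈ r.headAtoms ∪ r.objBodyAtoms) (hb : b ∈ r.headAtoms ∪ r.objBodyAtoms) :
    lam a = lam b :=
  hsame r hr a ⟨headObj_sub_atoms ha, strat_no_overlap hdep hr ha⟩
    b ⟨headObj_sub_atoms hb, strat_no_overlap hdep hr hb⟩

include hdep in
lemma strat_subj_lt {r : ERule α} (hr : r ∈ P) {a b : α}
    (ha : a ∈ r.headAtoms ∪ r.objBodyAtoms) (hb : b ∈ r.subjBodyAtoms) :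
    lam b < lam a :=
  hdep a b ⟨r, hr, ha, hb⟩

end Strat

lemma obj_atoms_sub {r : ERule α} {φ : EForm α} (hφ : φ ∈ r.body) (ho : isObjLit φ) :
    φ.atoms ⊆ r.objBodyAtoms := fun a ha => ⟨φ, hφ, ho, ha⟩

lemma red_rule_atoms {r : ERule α} (hr : r.wf) (W : BView α) :
    (reduct W Set.univ r.form).atoms ⊆ r.headAtoms ∪ r.objBodyAtoms := by
  intro b hb
  have : reduct W Set.univ r.form =
      .imp (conjForm (r.body.map (reduct W Set.univ))) (disjForm r.head) := by
    show reduct W Set.univ (.imp (conjForm r.body) (disjForm r.head)) = _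
    simp only [reduct, reduct_disj, reduct_conj]
  rw [this, atoms_imp] at hb
  rcases hb with hb | hb
  · rw [mem_atoms_conj] at hb
    obtain ⟨φ', hφ', hbφ⟩ := hb
    rw [List.mem_map] at hφ'
    obtain ⟨φ, hφ, rfl⟩ := hφ'
    rcases hr φ hφ with hobj | hsubj
    · rw [reduct_Kfree (objLit_KFree hobj)] at hbφ
      exact Or.inr (obj_atoms_sub hφ hobj hbφ)
    · rw [reduct_subj_atoms hsubj] at hbφ
      exact absurd hbφ (Set.notMem_empty b)
  · rw [atoms_disj] at hb
    exact Or.inl hb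

/-- Sub-lemma B (foundedness): under stratification, every stable model of the
reduct yields an equilibrium belief model. -/
lemma subB {P : EProgram α} (hwf : progWF P) {lam : α → ℕ}
    (hsame : ∀ r ∈ P, ∀ a ∈ r.atoms \ r.subjBodyAtoms, ∀ b ∈ r.atoms \ r.subjBodyAtoms,
      lam a = lam b)
    (hdep : ∀ a b, dep P a b → lam a > lam b)
    {N : ℕ} (hN : ∀ a, lam a < N)
    {W : BView α} (htot : totalView W) (hne : W.Nonempty)
    (hwfW : ∀ i ∈ W, i.1 ⊆ i.2)
    (hstar : ∀ T₁ ∈ Ts W, stableModel (Red P W) T₁)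
    {T : Set α} (hT : stableModel (Red P W) T) :
    eqBeliefModel (progTheory P) W T := by
  refine ⟨htot, ⟨⟨hne, hwfW⟩, subset_rfl, ?_, ?_⟩, ?_⟩
  · rintro φ ⟨r, hr, rfl⟩
    exact (rule_sat_iff_reduct htot hwfW hne (hwf r hr) T T).2
      (hT.1 _ (mem_Red.2 ⟨r, hr, rfl⟩))
  · rintro φ ⟨r, hr, rfl⟩ i hi
    have hi2 : i.1 = i.2 := htot i hi
    rw [hi2]
    exact (rule_sat_iff_reduct htot hwfW hne (hwf r hr) i.2 i.2).2
      ((hstar i.2 (mem_Ts_of_mem htot hi)).1 _ (mem_Red.2 ⟨r, hr, rfl⟩))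
  · rintro W' H' T' hbm' hlt
    obtain ⟨⟨⟨rfl, hH'T⟩, hcov, hiii⟩, hneq⟩ := hlt
    obtain ⟨⟨hne', hwf'⟩, hH'T', hsat', hep'⟩ := hbm'
    have hTs1 : ∀ i ∈ W', (i.2, i.2) ∈ W := by
      intro i hi
      obtain ⟨H₁, hmem, -⟩ := hiii i hi
      have : H₁ = i.2 := htot _ hmem
      rwa [this] at hmem
    set Q : Set (Set α × Set α) := insert (H', T') W' with hQ
    have hQwf : ∀ i ∈ Q, i.1 ⊆ i.2 := by
      rintro i (rfl | hi)
      · exact hH'T'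
      · exact hwf' i hi
    have hQsat : ∀ i ∈ Q, ∀ r ∈ P, sat r.form W' i.1 i.2 := by
      rintro i (rfl | hi) r hr
      · exact hsat' r.form ⟨r, hr, rfl⟩
      · exact hep' r.form ⟨r, hr, rfl⟩ i hi
    have hQstable : ∀ i ∈ Q, stableModel (Red P W) i.2 := by
      rintro i (rfl | hi)
      · exact hT
      · exact hstar i.2 (hTs1 i hi)
    have Claim : ∀ k, ∀ i ∈ Q, ∀ a, lam a < k → (a ∈ i.1 ↔ a ∈ i.2) := by
      intro k
      induction k with
      | zero => intro i hi a ha; exact absurd ha (by omega)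
      | succ k ih =>
        intro i hi a ha
        by_cases hak : lam a < k
        · exact ih i hi a hak
        · have hak' : lam a = k := by omega
          refine ⟨fun h => hQwf i hi h, fun haT => ?_⟩
          by_contra haH
          set H₂ : Set α := {b | (lam b = k ∧ b ∈ i.1) ∨ (lam b ≠ k ∧ b ∈ i.2)} with hH₂
          have hH₂sub : H₂ ⊆ i.2 := by
            rintro b (⟨-, hb⟩ | ⟨-, hb⟩)
            · exact hQwf i hi hb
            · exact hb
          have hH₂ne : H₂ ≠ i.2 := by
            intro h
            have : a ∈ H₂ := h ▸ haT
            rcases this with ⟨-, h1⟩ | ⟨h2, -⟩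
            · exact haH h1
            · exact h2 hak'
          have key : ∀ ψ ∈ Red P W, htSat ψ H₂ i.2 := by
            intro ψ hψ
            obtain ⟨r, hr, rfl⟩ := mem_Red.1 hψ
            have hst : htSat (reduct W Set.univ r.form) i.2 i.2 :=
              (hQstable i hi).1 _ hψ
            by_cases hex : ∃ a₀, a₀ ∈ r.headAtoms ∪ r.objBodyAtoms
            · obtain ⟨a₀, ha₀⟩ := hex
              by_cases hjk : lam a₀ = k
              · -- level-k rule : argue via satisfaction in W'
                have hψeq : reduct W Set.univ r.form =
                    .imp (conjForm (r.body.map (reduct W Set.univ))) (disjForm r.head) := by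
                  show reduct W Set.univ (.imp (conjForm r.body) (disjForm r.head)) = _
                  simp only [reduct, reduct_disj, reduct_conj]
                rw [hψeq]
                rw [hψeq] at hst
                unfold htSat at hst ⊢
                rw [sat_imp', tview_empty] at hst ⊢
                refine ⟨?_, hst.2⟩
                intro hbody
                rw [sat_conj] at hbody
                -- body of the rule holds at (W', i.1, i.2)
                have hsatB : sat (conjForm r.body) W' i.1 i.2 := by
                  rw [sat_conj]
                  intro φ hφ
                  rcases hwf r hr φ hφ with hobj | hsubj
                  · have hval := hbody _ (List.mem_map.2 ⟨φ, hφ, rfl⟩)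
                    rw [reduct_Kfree (objLit_KFree hobj)] at hval
                    have hrel : htSat φ H₂ i.2 ↔ htSat φ i.1 i.2 := by
                      refine htSat_relevance (objLit_KFree hobj) _ _ _ _ ?_ (fun b hb => Iff.rfl)
                      intro b hb
                      have hbk : lam b = k :=
                        (strat_rule_level hsame hdep hr
                          (Or.inr (obj_atoms_sub hφ hobj hb)) ha₀).trans hjk
                      constructor
                      · rintro (⟨-, h1⟩ | ⟨h2, -⟩)
                        · exact h1
                        · exact absurd hbk h2
                      · exact fun h => Or.inl ⟨hbk, h⟩
                    rw [sat_iff_htSat (objLit_KFree hobj) W' i.1 i.2, ← hrel]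
                    exact hval
                  · -- subjective literal of level < k
                    have hlow : ∀ b ∈ φ.atoms, lam b < k := by
                      intro b hb
                      have := strat_subj_lt hdep hr ha₀ (subj_sub_atoms hφ hsubj hb)
                      omega
                    have hb2 : ∀ l, isObjLit l → l.atoms ⊆ φ.atoms →
                        (Kval (tview W') l ↔ Kval W l) := by
                      intro l hl hsub
                      exact Kval_tview_bridge htot hTs1 hcov
                    have hb1 : ∀ l, isObjLit l → l.atoms ⊆ φ.atoms →
                        (Kval W' l ↔ Kval W l) := by
                      intro l hl hsub
                      rw [← hb2 l hl hsub, Kval_tview]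
                      refine forall₂_congr fun i' hi' => ?_
                      refine htSat_relevance (objLit_KFree hl) _ _ _ _ ?_ (fun b hb => Iff.rfl)
                      intro b hb
                      exact ih i' (Set.mem_insert_of_mem _ hi') b (hlow b (hsub hb))
                    exact (subj_lit_eval htot hne hwf' hsubj hb1 hb2 i.1 i.2 H₂ i.2).2
                      (hbody _ (List.mem_map.2 ⟨φ, hφ, rfl⟩))
                -- conclude the head holds at H₂
                have hhead : sat (disjForm r.head) W' i.1 i.2 := by
                  have := hQsat i hi r hr
                  have himp := (sat_imp' (conjForm r.body) (disjForm r.head) W' i.1 i.2).1 this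
                  exact himp.1 hsatB
                rw [sat_disj] at hhead
                obtain ⟨a₁, ha₁, ha₁H⟩ := hhead
                rw [sat_disj]
                refine ⟨a₁, ha₁, Or.inl ⟨?_, ha₁H⟩⟩
                exact (strat_rule_level hsame hdep hr (Or.inl ha₁) ha₀).trans hjk
              · -- rule of level ≠ k : reduct is insensitive to the change
                refine (htSat_relevance (KFree_reduct_univ W r.form) _ _ _ _ ?_
                  (fun b hb => Iff.rfl)).2 hst
                intro b hb
                have hbj : lam b = lam a₀ :=
                  strat_rule_level hsame hdep hr (red_rule_atoms (hwf r hr) W hb) ha₀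
                constructor
                · rintro (⟨h1, -⟩ | ⟨-, h2⟩)
                  · exact absurd h1 (by rw [hbj]; exact hjk)
                  · exact h2
                · intro h
                  exact Or.inr ⟨fun hc => hjk (hbj ▸ hc), h⟩
            · -- no head/objective-body atoms: reduct is atomless
              refine (htSat_relevance (KFree_reduct_univ W r.form) _ _ _ _ ?_
                (fun b hb => Iff.rfl)).2 hst
              intro b hb
              exact absurd ⟨b, red_rule_atoms (hwf r hr) W hb⟩ hex
          exact (hQstable i hi).2 H₂ (Set.ssubset_iff_subset_ne.2 ⟨hH₂sub, hH₂ne⟩) key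
    -- conclude: W' is total, H' = T, and W' = W
    have hQtot : ∀ i ∈ Q, i.1 = i.2 := by
      intro i hi
      ext a
      exact Claim N i hi a (hN a)
    have hH'eq : H' = T' := hQtot (H', T') (Set.mem_insert _ _)
    have hW'tot : totalView W' := fun i hi => hQtot i (Set.mem_insert_of_mem _ hi)
    have hW'W : W' = W := by
      ext i
      constructor
      · intro hi
        have h12 := hW'tot i hi
        have := hTs1 i hi
        obtain ⟨i1, i2⟩ := i
        cases h12
        exact this
      · intro hi
        obtain ⟨H₁, hmem, -⟩ := hcov i hi
        have h1 : H₁ = i.2 := hW'tot _ hmem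
        have h2 : i.1 = i.2 := htot i hi
        obtain ⟨i1, i2⟩ := i
        cases h2
        cases h1
        exact hmem
    exact hneq (by rw [hW'W, hH'eq])
end Aux4

section Aux5
attribute [local instance] Classical.propDecidable
variable {α : Type}

lemma Ts_nonempty {W : BView α} (htot : totalView W) (hne : W.Nonempty) :
    (Ts W).Nonempty := by
  obtain ⟨i, hi⟩ := hne
  exact ⟨i.2, mem_Ts_of_mem htot hi⟩

lemma epSat_bridge {W W' : BView α} (htotW : totalView W) (htotW' : totalView W')
    (hneW : W.Nonempty) (hneW' : W'.Nonempty) {l : EForm α} (hl : KFree l)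
    (hag1 : ∀ T ∈ Ts W, ∃ T' ∈ Ts W', ∀ a ∈ l.atoms, (a ∈ T ↔ a ∈ T'))
    (hag2 : ∀ T' ∈ Ts W', ∃ T ∈ Ts W, ∀ a ∈ l.atoms, (a ∈ T' ↔ a ∈ T)) :
    epSat W (.K l) ↔ epSat W' (.K l) := by
  rw [epSat_K hl hneW, epSat_K hl hneW', Kval_total htotW, Kval_total htotW']
  constructor
  · intro h T' hT'
    obtain ⟨T, hT, hagr⟩ := hag2 T' hT'
    exact (htSat_relevance hl T T T' T' (fun a ha => (hagr a ha).symm)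
      (fun a ha => (hagr a ha).symm)).1 (h T hT)
  · intro h T hT
    obtain ⟨T', hT', hagr⟩ := hag1 T hT
    exact (htSat_relevance hl T' T' T T (fun a ha => (hagr a ha).symm)
      (fun a ha => (hagr a ha).symm)).1 (h T' hT')

lemma ite_congr_prop {c c' : Prop} (h : c ↔ c') (A B : EForm α) :
    (if c then A else B) = (if c' then A else B) := by
  by_cases hc : c
  · rw [if_pos hc, if_pos (h.1 hc)]
  · rw [if_neg hc, if_neg (fun x => hc (h.2 x))]

lemma reduct_rule_eq {W W' : BView α} {r : ERule α} (hr : r.wf)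
    (hK : ∀ φ ∈ r.body, isSubjLit φ → ∀ l, isObjLit l → l.atoms ⊆ φ.atoms →
      (epSat W (.K l) ↔ epSat W' (.K l))) :
    reduct W Set.univ r.form = reduct W' Set.univ r.form := by
  have hlit : ∀ φ ∈ r.body, reduct W Set.univ φ = reduct W' Set.univ φ := by
    intro φ hφ
    rcases hr φ hφ with hobj | hsubj
    · rw [reduct_Kfree (objLit_KFree hobj), reduct_Kfree (objLit_KFree hobj)]
    · rcases hsubj with ⟨l, hl, rfl⟩ | ⟨l, hl, rfl⟩ | ⟨l, hl, rfl⟩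
      · rw [red_K, red_K]
        exact ite_congr_prop (hK _ hφ (Or.inl ⟨l, hl, rfl⟩) l hl (by rfl)) _ _
      · rw [red_neg, red_neg, red_K, red_K]
        rw [ite_congr_prop (hK _ hφ (Or.inr (Or.inl ⟨l, hl, rfl⟩)) l hl
          (by rw [atoms_neg]; rfl)) EForm.top .bot]
      · rw [red_neg, red_neg, red_neg, red_neg, red_K, red_K]
        rw [ite_congr_prop (hK _ hφ (Or.inr (Or.inr ⟨l, hl, rfl⟩)) l hl
          (by rw [atoms_neg, atoms_neg]; rfl)) EForm.top .bot]
  show reduct W Set.univ (.imp (conjForm r.body) (disjForm r.head)) =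
    reduct W' Set.univ (.imp (conjForm r.body) (disjForm r.head))
  simp only [reduct, reduct_disj, reduct_conj]
  congr 1
  congr 1
  exact List.map_congr_left hlit

/-- The inductive step for uniqueness of G91 world views. -/
lemma uniq_step {P : EProgram α} (hwf : progWF P) {lam : α → ℕ}
    (hsame : ∀ r ∈ P, ∀ a ∈ r.atoms \ r.subjBodyAtoms, ∀ b ∈ r.atoms \ r.subjBodyAtoms,
      lam a = lam b)
    (hdep : ∀ a b, dep P a b → lam a > lam b)
    {W W' : BView α} {k : ℕ}
    (hWst : ∀ T ∈ Ts W, stableModel (Red P W) T)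
    (hW'st : ∀ T ∈ Ts W', stableModel (Red P W') T)
    (hW'fix : ∀ T, stableModel (Red P W') T → T ∈ Ts W')
    (hredeq : ∀ r ∈ P, (∀ b ∈ r.subjBodyAtoms, lam b < k) →
      reduct W Set.univ r.form = reduct W' Set.univ r.form)
    {T : Set α} (hT : T ∈ Ts W)
    {T' : Set α} (hT' : T' ∈ Ts W') (hagr : ∀ a, lam a < k → (a ∈ T ↔ a ∈ T')) :
    ∃ T'' ∈ Ts W', ∀ a, lam a < k + 1 → (a ∈ T ↔ a ∈ T'') := by
  classical
  set T'' : Set α := {b | (lam b = k ∧ b ∈ T) ∨ (lam b ≠ k ∧ b ∈ T')} with hT''def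
  have hT''k : ∀ b, lam b = k → (b ∈ T'' ↔ b ∈ T) := by
    intro b hb; rw [hT''def]; simp [Set.mem_setOf_eq, hb]
  have hT''nk : ∀ b, lam b ≠ k → (b ∈ T'' ↔ b ∈ T') := by
    intro b hb; rw [hT''def]; simp [Set.mem_setOf_eq, hb]
  have hredk : ∀ r ∈ P, ∀ a₀ ∈ r.headAtoms ∪ r.objBodyAtoms, lam a₀ = k →
      reduct W Set.univ r.form = reduct W' Set.univ r.form := by
    intro r hr a₀ ha₀ hk
    refine hredeq r hr (fun b hb => ?_)
    have := strat_subj_lt hdep hr ha₀ hb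
    omega
  have hlev : ∀ r ∈ P, ∀ a₀ ∈ r.headAtoms ∪ r.objBodyAtoms, ∀ (V : BView α),
      ∀ b ∈ (reduct V Set.univ r.form).atoms, lam b = lam a₀ := by
    intro r hr a₀ ha₀ V b hb
    exact strat_rule_level hsame hdep hr (red_rule_atoms (hwf r hr) V hb) ha₀
  -- total satisfaction of the mixed interpretation
  have htotsat : ∀ ψ ∈ Red P W', htSat ψ T'' T'' := by
    intro ψ hψ
    obtain ⟨r, hr, rfl⟩ := mem_Red.1 hψ
    by_cases hex : ∃ a₀, a₀ ∈ r.headAtoms ∪ r.objBodyAtoms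
    · obtain ⟨a₀, ha₀⟩ := hex
      by_cases hjk : lam a₀ = k
      · rw [← hredk r hr a₀ ha₀ hjk]
        refine (htSat_relevance (KFree_reduct_univ W r.form) T T T'' T'' ?_ ?_).1
          ((hWst T hT).1 _ (mem_Red.2 ⟨r, hr, rfl⟩)) <;>
        · intro b hb
          exact (hT''k b ((hlev r hr a₀ ha₀ W b hb).trans hjk)).symm
      · refine (htSat_relevance (KFree_reduct_univ W' r.form) T' T' T'' T'' ?_ ?_).1
          ((hW'st T' hT').1 _ (mem_Red.2 ⟨r, hr, rfl⟩)) <;>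
        · intro b hb
          exact (hT''nk b (fun hc => hjk ((hlev r hr a₀ ha₀ W' b hb).symm.trans hc))).symm
    · refine (htSat_relevance (KFree_reduct_univ W' r.form) T' T' T'' T'' ?_ ?_).1
        ((hW'st T' hT').1 _ (mem_Red.2 ⟨r, hr, rfl⟩)) <;>
      · intro b hb
        exact absurd ⟨b, red_rule_atoms (hwf r hr) W' hb⟩ hex
  -- minimality
  have hmin : ∀ H, H ⊂ T'' → ¬ ∀ ψ ∈ Red P W', htSat ψ H T'' := by
    intro H hss hsatH
    obtain ⟨a, haT'', haH⟩ := Set.exists_of_ssubset hss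
    set Hj : Set α := {b | (lam b = lam a ∧ b ∈ H) ∨ (lam b ≠ lam a ∧ b ∈ T'')} with hHjdef
    have hHjj : ∀ b, lam b = lam a → (b ∈ Hj ↔ b ∈ H) := by
      intro b hb; rw [hHjdef]; simp [Set.mem_setOf_eq, hb]
    have hHjnj : ∀ b, lam b ≠ lam a → (b ∈ Hj ↔ b ∈ T'') := by
      intro b hb; rw [hHjdef]; simp [Set.mem_setOf_eq, hb]
    have haHj : a ∉ Hj := fun h => haH ((hHjj a rfl).1 h)
    have hHjsub : Hj ⊆ T'' := by
      intro b hb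
      by_cases hbl : lam b = lam a
      · exact hss.subset ((hHjj b hbl).1 hb)
      · exact (hHjnj b hbl).1 hb
    have hsatHj : ∀ ψ ∈ Red P W', htSat ψ Hj T'' := by
      intro ψ hψ
      obtain ⟨r, hr, rfl⟩ := mem_Red.1 hψ
      by_cases hex : ∃ a₀, a₀ ∈ r.headAtoms ∪ r.objBodyAtoms
      · obtain ⟨a₀, ha₀⟩ := hex
        by_cases hja : lam a₀ = lam a
        · refine (htSat_relevance (KFree_reduct_univ W' r.form) H T'' Hj T'' ?_
            (fun b hb => Iff.rfl)).1 (hsatH _ hψ)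
          intro b hb
          exact (hHjj b ((hlev r hr a₀ ha₀ W' b hb).trans hja)).symm
        · refine (htSat_relevance (KFree_reduct_univ W' r.form) T'' T'' Hj T'' ?_
            (fun b hb => Iff.rfl)).1 (htotsat _ hψ)
          intro b hb
          exact (hHjnj b (fun hc => hja ((hlev r hr a₀ ha₀ W' b hb).symm.trans hc))).symm
      · refine (htSat_relevance (KFree_reduct_univ W' r.form) T'' T'' Hj T'' ?_
          (fun b hb => Iff.rfl)).1 (htotsat _ hψ)
        intro b hb
        exact absurd ⟨b, red_rule_atoms (hwf r hr) W' hb⟩ hex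
    by_cases hak : lam a = k
    · -- transfer to T and the reduct w.r.t. W
      set G : Set α := {b | (lam b = k ∧ b ∈ Hj) ∨ (lam b ≠ k ∧ b ∈ T)} with hGdef
      have hGk : ∀ b, lam b = k → (b ∈ G ↔ b ∈ Hj) := by
        intro b hb; rw [hGdef]; simp [Set.mem_setOf_eq, hb]
      have hGnk : ∀ b, lam b ≠ k → (b ∈ G ↔ b ∈ T) := by
        intro b hb; rw [hGdef]; simp [Set.mem_setOf_eq, hb]
      have hGsub : G ⊆ T := by
        intro b hb
        by_cases hbl : lam b = k
        · exact (hT''k b hbl).1 (hHjsub ((hGk b hbl).1 hb))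
        · exact (hGnk b hbl).1 hb
      have haT : a ∈ T := (hT''k a hak).1 haT''
      have haG : a ∉ G := fun h => haHj ((hGk a hak).1 h)
      have hGss : G ⊂ T := Set.ssubset_iff_subset_ne.2
        ⟨hGsub, fun heq => haG (heq.symm ▸ haT)⟩
      refine (hWst T hT).2 G hGss ?_
      intro ψ hψ
      obtain ⟨r, hr, rfl⟩ := mem_Red.1 hψ
      by_cases hex : ∃ a₀, a₀ ∈ r.headAtoms ∪ r.objBodyAtoms
      · obtain ⟨a₀, ha₀⟩ := hex
        by_cases hjk : lam a₀ = k
        · rw [hredk r hr a₀ ha₀ hjk]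
          refine (htSat_relevance (KFree_reduct_univ W' r.form) Hj T'' G T ?_ ?_).1
            (hsatHj _ (mem_Red.2 ⟨r, hr, rfl⟩))
          · intro b hb
            exact (hGk b ((hlev r hr a₀ ha₀ W' b hb).trans hjk)).symm
          · intro b hb
            exact hT''k b ((hlev r hr a₀ ha₀ W' b hb).trans hjk)
        · refine (htSat_relevance (KFree_reduct_univ W r.form) T T G T ?_
            (fun b hb => Iff.rfl)).1 ((hWst T hT).1 _ hψ)
          intro b hb
          exact (hGnk b (fun hc => hjk ((hlev r hr a₀ ha₀ W b hb).symm.trans hc))).symm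
      · refine (htSat_relevance (KFree_reduct_univ W r.form) T T G T ?_
          (fun b hb => Iff.rfl)).1 ((hWst T hT).1 _ hψ)
        intro b hb
        exact absurd ⟨b, red_rule_atoms (hwf r hr) W hb⟩ hex
    · -- transfer to T' within the reduct w.r.t. W'
      set G : Set α := {b | (lam b = lam a ∧ b ∈ Hj) ∨ (lam b ≠ lam a ∧ b ∈ T')} with hGdef
      have hGj : ∀ b, lam b = lam a → (b ∈ G ↔ b ∈ Hj) := by
        intro b hb; rw [hGdef]; simp [Set.mem_setOf_eq, hb]
      have hGnj : ∀ b, lam b ≠ lam a → (b ∈ G ↔ b ∈ T') := by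
        intro b hb; rw [hGdef]; simp [Set.mem_setOf_eq, hb]
      have hGsub : G ⊆ T' := by
        intro b hb
        by_cases hbl : lam b = lam a
        · exact (hT''nk b (hbl.symm ▸ hak)).1 (hHjsub ((hGj b hbl).1 hb))
        · exact (hGnj b hbl).1 hb
      have haT' : a ∈ T' := (hT''nk a hak).1 haT''
      have haG : a ∉ G := fun h => haHj ((hGj a rfl).1 h)
      have hGss : G ⊂ T' := Set.ssubset_iff_subset_ne.2
        ⟨hGsub, fun heq => haG (heq.symm ▸ haT')⟩
      refine (hW'st T' hT').2 G hGss ?_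
      intro ψ hψ
      obtain ⟨r, hr, rfl⟩ := mem_Red.1 hψ
      by_cases hex : ∃ a₀, a₀ ∈ r.headAtoms ∪ r.objBodyAtoms
      · obtain ⟨a₀, ha₀⟩ := hex
        by_cases hja : lam a₀ = lam a
        · refine (htSat_relevance (KFree_reduct_univ W' r.form) Hj T'' G T' ?_ ?_).1
            (hsatHj _ hψ)
          · intro b hb
            exact (hGj b ((hlev r hr a₀ ha₀ W' b hb).trans hja)).symm
          · intro b hb
            exact hT''nk b (((hlev r hr a₀ ha₀ W' b hb).trans hja).symm ▸ hak)
        · refine (htSat_relevance (KFree_reduct_univ W' r.form) T' T' G T' ?_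
            (fun b hb => Iff.rfl)).1 ((hW'st T' hT').1 _ hψ)
          intro b hb
          exact (hGnj b (fun hc => hja ((hlev r hr a₀ ha₀ W' b hb).symm.trans hc))).symm
      · refine (htSat_relevance (KFree_reduct_univ W' r.form) T' T' G T' ?_
          (fun b hb => Iff.rfl)).1 ((hW'st T' hT').1 _ hψ)
        intro b hb
        exact absurd ⟨b, red_rule_atoms (hwf r hr) W' hb⟩ hex
  refine ⟨T'', hW'fix T'' ⟨htotsat, hmin⟩, ?_⟩
  intro b hb
  by_cases hbk : lam b = k
  · exact (hT''k b hbk).symm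
  · exact (hagr b (by omega)).trans (hT''nk b hbk).symm
end Aux5

section Aux6
attribute [local instance] Classical.propDecidable
variable {α : Type}

lemma Red_eq (P : EProgram α) (W : BView α) :
    reduct W Set.univ '' progTheory P = Red P W := rfl

lemma faeel_iff_g91 {P : EProgram α} (hwf : progWF P) {lam : α → ℕ}
    (hsame : ∀ r ∈ P, ∀ a ∈ r.atoms \ r.subjBodyAtoms, ∀ b ∈ r.atoms \ r.subjBodyAtoms,
      lam a = lam b)
    (hdep : ∀ a b, dep P a b → lam a > lam b)
    {N : ℕ} (hN : ∀ a, lam a < N) (W : BView α) :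
    FAEEL (progTheory P) W ↔ G91 (progTheory P) W := by
  constructor
  · rintro ⟨⟨hne, hwfW⟩, htot, hfix⟩
    have hTsE : Ts W = {T | eqBeliefModel (progTheory P) W T} := by
      conv_lhs => rw [hfix]
      rw [Ts_ofSets]
    have hstar : ∀ T₁ ∈ Ts W, stableModel (Red P W) T₁ := by
      intro T₁ h
      rw [hTsE] at h
      exact subA hwf h
    have hE : {T | eqBeliefModel (progTheory P) W T} = SMset (Red P W) := by
      ext T
      exact ⟨fun h => subA hwf h,
        fun h => subB hwf hsame hdep hN htot hne hwfW hstar h⟩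
    refine ⟨⟨hne, hwfW⟩, htot, ?_⟩
    rw [Red_eq]
    rw [show SMset (Red P W) = {T | eqBeliefModel (progTheory P) W T} from hE.symm]
    exact hfix
  · rintro ⟨⟨hne, hwfW⟩, htot, hfix⟩
    rw [Red_eq] at hfix
    have hTsS : Ts W = SMset (Red P W) := by
      conv_lhs => rw [hfix]
      rw [Ts_ofSets]
    have hstar : ∀ T₁ ∈ Ts W, stableModel (Red P W) T₁ := by
      intro T₁ h; rwa [hTsS] at h
    have hE : {T | eqBeliefModel (progTheory P) W T} = SMset (Red P W) := by
      ext T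
      exact ⟨fun h => subA hwf h,
        fun h => subB hwf hsame hdep hN htot hne hwfW hstar h⟩
    refine ⟨⟨hne, hwfW⟩, htot, ?_⟩
    rw [hE]
    exact hfix

lemma g91_unique {P : EProgram α} (hwf : progWF P) {lam : α → ℕ}
    (hsame : ∀ r ∈ P, ∀ a ∈ r.atoms \ r.subjBodyAtoms, ∀ b ∈ r.atoms \ r.subjBodyAtoms,
      lam a = lam b)
    (hdep : ∀ a b, dep P a b → lam a > lam b)
    {N : ℕ} (hN : ∀ a, lam a < N)
    {W W' : BView α} (hG : G91 (progTheory P) W) (hG' : G91 (progTheory P) W') :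
    W = W' := by
  obtain ⟨⟨hne, hwfW⟩, htot, hfix⟩ := hG
  obtain ⟨⟨hne', hwfW'⟩, htot', hfix'⟩ := hG'
  rw [Red_eq] at hfix hfix'
  have hTs : Ts W = SMset (Red P W) := by
    conv_lhs => rw [hfix]
    rw [Ts_ofSets]
  have hTs' : Ts W' = SMset (Red P W') := by
    conv_lhs => rw [hfix']
    rw [Ts_ofSets]
  have hWst : ∀ T ∈ Ts W, stableModel (Red P W) T := fun T h => by rwa [hTs] at h
  have hW'st : ∀ T ∈ Ts W', stableModel (Red P W') T := fun T h => by rwa [hTs'] at h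
  have hWfix : ∀ T, stableModel (Red P W) T → T ∈ Ts W := fun T h => by
    rw [hTs]; exact h
  have hW'fix : ∀ T, stableModel (Red P W') T → T ∈ Ts W' := fun T h => by
    rw [hTs']; exact h
  have Agree : ∀ k, (∀ T ∈ Ts W, ∃ T' ∈ Ts W', ∀ a, lam a < k → (a ∈ T ↔ a ∈ T')) ∧
      (∀ T' ∈ Ts W', ∃ T ∈ Ts W, ∀ a, lam a < k → (a ∈ T' ↔ a ∈ T)) := by
    intro k
    induction k with
    | zero =>
      have h1 := Ts_nonempty htot hne
      have h2 := Ts_nonempty htot' hne'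
      exact ⟨fun T _ => ⟨h2.choose, h2.choose_spec, fun a ha => absurd ha (by omega)⟩,
             fun T' _ => ⟨h1.choose, h1.choose_spec, fun a ha => absurd ha (by omega)⟩⟩
    | succ k ih =>
      have hK : ∀ l : EForm α, KFree l → (∀ a ∈ l.atoms, lam a < k) →
          (epSat W (.K l) ↔ epSat W' (.K l)) := by
        intro l hl hlow
        refine epSat_bridge htot htot' hne hne' hl ?_ ?_
        · intro T hT
          obtain ⟨T', hT', hag⟩ := ih.1 T hT
          exact ⟨T', hT', fun a ha => hag a (hlow a ha)⟩
        · intro T' hT'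
          obtain ⟨T, hT, hag⟩ := ih.2 T' hT'
          exact ⟨T, hT, fun a ha => hag a (hlow a ha)⟩
      have hredeq : ∀ r ∈ P, (∀ b ∈ r.subjBodyAtoms, lam b < k) →
          reduct W Set.univ r.form = reduct W' Set.univ r.form := by
        intro r hr hlow
        refine reduct_rule_eq (hwf r hr) ?_
        intro φ hφ hsubj l hl hsub
        exact hK l (objLit_KFree hl)
          (fun a ha => hlow a (subj_sub_atoms hφ hsubj (hsub ha)))
      have hredeq' : ∀ r ∈ P, (∀ b ∈ r.subjBodyAtoms, lam b < k) →
          reduct W' Set.univ r.form = reduct W Set.univ r.form :=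
        fun r hr hlow => (hredeq r hr hlow).symm
      constructor
      · intro T hT
        obtain ⟨T', hT', hag⟩ := ih.1 T hT
        exact uniq_step hwf hsame hdep hWst hW'st hW'fix hredeq hT hT' hag
      · intro T' hT'
        obtain ⟨T, hT, hag⟩ := ih.2 T' hT'
        exact uniq_step hwf hsame hdep hW'st hWst hWfix hredeq' hT' hT hag
  have hTsEq : Ts W = Ts W' := by
    ext T
    constructor
    · intro hT
      obtain ⟨T', hT', hag⟩ := (Agree N).1 T hT
      have hTT : T = T' := Set.ext fun a => hag a (hN a)
      rwa [hTT]
    · intro hT'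
      obtain ⟨T₀, hT₀, hag⟩ := (Agree N).2 T hT'
      have hTT : T = T₀ := Set.ext fun a => hag a (hN a)
      rwa [hTT]
  rw [total_eq_ofSets_Ts htot, total_eq_ofSets_Ts htot', hTsEq]
end Aux6

/-- for epistemically stratified programs FAEEL and G91 world views
coincide; in particular there is at most one world view in each semantics. -/
theorem stmt11 {α : Type} [Finite α] (P : EProgram α) (hwf : progWF P)
    (hstrat : stratified P) :
    (∀ W : BView α, FAEEL (progTheory P) W ↔ G91 (progTheory P) W) ∧
    (∀ W W' : BView α, FAEEL (progTheory P) W → FAEEL (progTheory P) W' → W = W') ∧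
    (∀ W W' : BView α, G91 (progTheory P) W → G91 (progTheory P) W' → W = W') := by
  obtain ⟨lam, hsame, hdep⟩ := hstrat
  have hfin : (Set.range lam).Finite := Set.finite_range lam
  obtain ⟨N₀, hN₀⟩ := hfin.bddAbove
  have hN : ∀ a, lam a < N₀ + 1 := fun a => Nat.lt_succ_of_le (hN₀ ⟨a, rfl⟩)
  refine ⟨fun W => faeel_iff_g91 hwf hsame hdep hN W, ?_, ?_⟩
  · intro W W' h h'
    exact g91_unique hwf hsame hdep hN
      ((faeel_iff_g91 hwf hsame hdep hN W).1 h)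
      ((faeel_iff_g91 hwf hsame hdep hN W').1 h')
  · intro W W' h h'
    exact g91_unique hwf hsame hdep hN h h'
end Epist
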